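/- Let γ = 2 and α = 1 in one dimension. If x_1 < x_2 < … < x_n is a global minimizer of E_n(x) = Σ_{i≠j} (|x_i−x_j|²/2 − |x_i−x_j|), then the points are equally spaced with x_{k+1} − x_k = 2/n for all k = 1,…,n−1. -/
import Mathlib


open Finset

noncomputable def En1 (n : ℕ) (x : Fin n → ℝ) : ℝ :=
  ∑ i, ∑ j, if i = j then 0 else |x i - x j| ^ 2 / 2 - |x i - x j|

lemma fstep (d t : ℝ) (ht : |t| < |d|) :
    |d + t| ^ 2 / 2 - |d + t| =
      (|d| ^ 2 / 2 - |d|) + (t ^ 2 / 2 + t * (d + if 0 < d then (-1:ℝ) else 1)) := by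
  have hd0 : d ≠ 0 := by
    rintro rfl
    simp only [abs_zero] at ht
    exact absurd ht (abs_nonneg t).not_gt
  rcases hd0.lt_or_gt with hd | hd
  · have h2 : |d| = -d := abs_of_neg hd
    have h1 : d + t < 0 := by
      have := (abs_lt.mp ht).2
      rw [h2] at this
      linarith
    rw [abs_of_neg hd, abs_of_neg h1, if_neg (not_lt.mpr hd.le)]
    ring
  · have h1 : 0 < d + t := by
      have := (abs_lt.mp ht).1
      rw [abs_of_pos hd] at this
      linarith
    rw [abs_of_pos hd, abs_of_pos h1, if_pos hd]
    ring

lemma double_split (n : ℕ) (k : Fin n) (g : Fin n → Fin n → ℝ) (hg : ∀ i, g i i = 0) :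
    ∑ i, ∑ j, g i j =
      (∑ j ∈ univ.erase k, (g k j + g j k)) +
        ∑ i ∈ univ.erase k, ∑ j ∈ univ.erase k, g i j := by
  rw [← Finset.add_sum_erase _ _ (mem_univ k)]
  have h1 : ∑ j, g k j = ∑ j ∈ univ.erase k, g k j := (Finset.sum_erase _ (hg k)).symm
  have h2 : ∀ i : Fin n, ∑ j, g i j = g i k + ∑ j ∈ univ.erase k, g i j := fun i =>
    (Finset.add_sum_erase _ _ (mem_univ k)).symm
  simp_rw [h1, h2, Finset.sum_add_distrib]
  ring

lemma update_energy (n : ℕ) (x : Fin n → ℝ) (k : Fin n) (t : ℝ)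
    (ht : ∀ j : Fin n, j ≠ k → |t| < |x k - x j|) :
    En1 n (Function.update x k (x k + t)) =
      En1 n x + ∑ j ∈ univ.erase k,
        (t ^ 2 + 2 * t * (x k - x j + if 0 < x k - x j then (-1:ℝ) else 1)) := by
  set y := Function.update x k (x k + t) with hy
  have hyk : y k = x k + t := Function.update_self k _ x
  have hyj : ∀ j : Fin n, j ≠ k → y j = x j := fun j hj => Function.update_of_ne hj _ x
  unfold En1
  rw [double_split n k (fun i j => if i = j then 0 else |y i - y j| ^ 2 / 2 - |y i - y j|)
    (by simp),
    double_split n k (fun i j => if i = j then 0 else |x i - x j| ^ 2 / 2 - |x i - x j|)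
    (by simp)]
  have hD : (∑ i ∈ univ.erase k, ∑ j ∈ univ.erase k,
        (if i = j then (0:ℝ) else |y i - y j| ^ 2 / 2 - |y i - y j|)) =
      ∑ i ∈ univ.erase k, ∑ j ∈ univ.erase k,
        (if i = j then (0:ℝ) else |x i - x j| ^ 2 / 2 - |x i - x j|) := by
    refine Finset.sum_congr rfl fun i hi => Finset.sum_congr rfl fun j hj => ?_
    rw [hyj i (Finset.ne_of_mem_erase hi), hyj j (Finset.ne_of_mem_erase hj)]
  have key : ∀ j ∈ univ.erase k,
      ((if k = j then (0:ℝ) else |y k - y j| ^ 2 / 2 - |y k - y j|) +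
        (if j = k then (0:ℝ) else |y j - y k| ^ 2 / 2 - |y j - y k|)) =
      ((if k = j then (0:ℝ) else |x k - x j| ^ 2 / 2 - |x k - x j|) +
        (if j = k then (0:ℝ) else |x j - x k| ^ 2 / 2 - |x j - x k|)) +
        (t ^ 2 + 2 * t * (x k - x j + if 0 < x k - x j then (-1:ℝ) else 1)) := by
    intro j hj
    have hj' : j ≠ k := Finset.ne_of_mem_erase hj
    have hk' : k ≠ j := hj'.symm
    rw [if_neg hk', if_neg hj', if_neg hk', if_neg hj']
    rw [hyk, hyj j hj']
    have e1 : |x j - (x k + t)| = |x k + t - x j| := abs_sub_comm _ _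
    have e2 : |x j - x k| = |x k - x j| := abs_sub_comm _ _
    have e3 : x k + t - x j = (x k - x j) + t := by ring
    rw [e1, e2, e3]
    have hf := fstep (x k - x j) t (ht j hj')
    linarith
  rw [hD, Finset.sum_congr rfl key, Finset.sum_add_distrib]
  ring

lemma Bzero (n : ℕ) (hn : 2 ≤ n) (x : Fin n → ℝ) (hinj : Function.Injective x)
    (hmin : ∀ y : Fin n → ℝ, En1 n x ≤ En1 n y) (k : Fin n) :
    (∑ j ∈ univ.erase k, (x k - x j + if 0 < x k - x j then (-1:ℝ) else 1)) = 0 := by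
  set B := ∑ j ∈ univ.erase k, (x k - x j + if 0 < x k - x j then (-1:ℝ) else 1) with hB
  have hcard : (univ.erase k).card = n - 1 := by
    rw [Finset.card_erase_of_mem (mem_univ k), Finset.card_univ, Fintype.card_fin]
  have hne : (univ.erase k).Nonempty := by
    rw [← Finset.card_pos, hcard]; omega
  set δ := (univ.erase k).inf' hne (fun j => |x k - x j|) with hδdef
  have hδpos : 0 < δ := by
    rw [hδdef, Finset.lt_inf'_iff]
    intro j hj
    have hjk : j ≠ k := Finset.ne_of_mem_erase hj
    have : x k ≠ x j := fun h => hjk (hinj h).symm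
    exact abs_pos.mpr (sub_ne_zero.mpr this)
  have hδle : ∀ j : Fin n, j ≠ k → δ ≤ |x k - x j| := fun j hj =>
    Finset.inf'_le _ (Finset.mem_erase.mpr ⟨hj, mem_univ j⟩)
  have hA : (1:ℝ) ≤ (n:ℝ) - 1 := by
    have : (2:ℝ) ≤ n := by exact_mod_cast hn
    linarith
  have hquad : ∀ t : ℝ, |t| < δ → 0 ≤ ((n:ℝ) - 1) * t ^ 2 + 2 * t * B := by
    intro t htδ
    have h1 := hmin (Function.update x k (x k + t))
    rw [update_energy n x k t (fun j hj => htδ.trans_le (hδle j hj))] at h1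
    have h2 : ∑ j ∈ univ.erase k,
        (t ^ 2 + 2 * t * (x k - x j + if 0 < x k - x j then (-1:ℝ) else 1)) =
        ((n:ℝ) - 1) * t ^ 2 + 2 * t * B := by
      rw [Finset.sum_add_distrib, ← Finset.mul_sum, Finset.sum_const, hcard, nsmul_eq_mul,
        Nat.cast_sub (by omega), Nat.cast_one]
    rw [h2] at h1
    linarith
  by_contra hBne
  have hBpos : 0 < |B| := abs_pos.mpr hBne
  set s := min (δ / 2) (|B| / (2 * ((n:ℝ) - 1))) with hs
  have hspos : 0 < s := lt_min (by linarith) (by positivity)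
  have hsδ : s < δ := (min_le_left _ _).trans_lt (by linarith)
  have hsB : 2 * ((n:ℝ) - 1) * s ≤ |B| := by
    have h := min_le_right (δ / 2) (|B| / (2 * ((n:ℝ) - 1)))
    rw [← hs] at h
    have hpos : (0:ℝ) < 2 * ((n:ℝ) - 1) := by linarith
    calc 2 * ((n:ℝ) - 1) * s ≤ 2 * ((n:ℝ) - 1) * (|B| / (2 * ((n:ℝ) - 1))) := by
          exact mul_le_mul_of_nonneg_left h hpos.le
      _ = |B| := by field_simp
  rcases lt_or_gt_of_ne hBne with h | h
  · have hq := hquad s (by rw [abs_of_pos hspos]; exact hsδ)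
    have habs : |B| = -B := abs_of_neg h
    rw [habs] at hsB hBpos
    nlinarith [hspos, hA, mul_pos hspos hBpos]
  · have hq := hquad (-s) (by rw [abs_neg, abs_of_pos hspos]; exact hsδ)
    have habs : |B| = B := abs_of_pos h
    rw [habs] at hsB hBpos
    nlinarith [hspos, hA, mul_pos hspos hBpos]

theorem stmt_18 (n : ℕ) (hn : 2 ≤ n) (x : Fin n → ℝ) (hx : StrictMono x)
    (hmin : ∀ y : Fin n → ℝ, En1 n x ≤ En1 n y) :
    ∀ i : Fin n, ∀ h1 : (i : ℕ) + 1 < n, x ⟨(i : ℕ) + 1, h1⟩ - x i = 2 / n := by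
  intro i h1
  have hinj := hx.injective
  set k' : Fin n := ⟨(i : ℕ) + 1, h1⟩ with hk'
  have hBk := Bzero n hn x hinj hmin i
  have hBk' := Bzero n hn x hinj hmin k'
  have hBuniv : ∀ a : Fin n,
      (∑ j ∈ univ.erase a, (x a - x j + if 0 < x a - x j then (-1:ℝ) else 1)) =
      (∑ j, (x a - x j + if j < a then (-1:ℝ) else 1)) - 1 := by
    intro a
    have hterm : ∀ j : Fin n,
        (x a - x j + if 0 < x a - x j then (-1:ℝ) else 1) =
        (x a - x j + if j < a then (-1:ℝ) else 1) := by
      intro j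
      have : (0 < x a - x j) ↔ j < a := by rw [sub_pos, hx.lt_iff_lt]
      simp only [this]
    simp_rw [hterm]
    rw [← Finset.sum_erase_add _ _ (mem_univ a)]
    have : (x a - x a + if a < a then (-1:ℝ) else 1) = 1 := by simp
    rw [this]
    ring
  rw [hBuniv] at hBk hBk'
  have hdiff : ∑ j, ((x k' - x j + if j < k' then (-1:ℝ) else 1) -
      (x i - x j + if j < i then (-1:ℝ) else 1)) = 0 := by
    rw [Finset.sum_sub_distrib]
    linarith
  have hterm2 : ∀ j : Fin n,
      ((x k' - x j + if j < k' then (-1:ℝ) else 1) -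
        (x i - x j + if j < i then (-1:ℝ) else 1)) =
      (x k' - x i) + (if j = i then (-2:ℝ) else 0) := by
    intro j
    by_cases hji : j = i
    · subst hji
      have h1' : j < k' := by rw [hk']; exact Fin.lt_def.mpr (by simp)
      simp [h1', lt_irrefl]
      ring
    · by_cases hji2 : j < i
      · have hlt : j < k' := by
          rw [Fin.lt_def] at hji2 ⊢
          simp only [hk']
          omega
        simp [hlt, hji2, hji]
      · have hlt : ¬ j < k' := by
          rw [Fin.lt_def] at hji2 ⊢
          simp only [hk']
          have : (j : ℕ) ≠ (i : ℕ) := fun h => hji (Fin.ext h)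
          omega
        simp [hlt, hji2, hji]
  rw [Finset.sum_congr rfl (fun j _ => hterm2 j)] at hdiff
  rw [Finset.sum_add_distrib, Finset.sum_const, Finset.sum_ite_eq' univ i fun _ => (-2:ℝ)] at hdiff
  simp only [Finset.card_univ, Fintype.card_fin, mem_univ, if_true, nsmul_eq_mul] at hdiff
  have hn0 : (n:ℝ) ≠ 0 := Nat.cast_ne_zero.mpr (by omega)
  have : (n:ℝ) * (x k' - x i) = 2 := by linarith
  field_simp
  linarith
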